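/- Let $T$ be a spanning tree of the $n \times n$ eight-neighbor grid ($n \ge 1$), rooted at the corner outlet $(0,0)$, such that every tree edge joins vertices that are adjacent in the grid. For $2 \le k \le n$, let $C_k$ be the set of vertices at king-move distance $k - 1$ from the outlet. Then $\sum_{x \in C_k} A_x \ge (2k - 1) + (n^2 - k^2)$, where $A_x$ is the number of vertices in the subtree of $T$ rooted at $x$. -/

import Mathlib

/-- The king-move (eight-neighbor) graph on `{0, …, n-1}²`: distinct vertices are
adjacent iff they differ by at most 1 in each coordinate. -/
def kingGraph (n : ℕ) : SimpleGraph (Fin n × Fin n) where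
  Adj x y := x ≠ y ∧ ((x.1 : ℤ) - (y.1 : ℤ)).natAbs ≤ 1 ∧ ((x.2 : ℤ) - (y.2 : ℤ)).natAbs ≤ 1
  symm := by
    constructor
    rintro x y ⟨h1, h2, h3⟩
    exact ⟨h1.symm, by omega, by omega⟩
  loopless := by constructor; rintro x ⟨h, -⟩; exact h rfl

section aux
variable {n : ℕ}

/-- king distance function -/
def kd (v : Fin n × Fin n) : ℕ := max v.1.val v.2.val

lemma kd_adj {u v : Fin n × Fin n} (h : (kingGraph n).Adj u v) : kd u ≤ kd v + 1 := by
  obtain ⟨-, h1, h2⟩ := h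
  unfold kd; omega

lemma kd_le_walk {u v : Fin n × Fin n} (p : (kingGraph n).Walk u v) :
    kd v ≤ kd u + p.length := by
  induction p with
  | nil => simp
  | cons h p ih =>
    have := kd_adj ((kingGraph n).adj_symm h)
    simp only [SimpleGraph.Walk.length_cons]
    omega

lemma exists_walk_aux (hn : 0 < n) :
    ∀ (N : ℕ) (v : Fin n × Fin n), kd v = N →
      ∃ p : (kingGraph n).Walk (⟨0, hn⟩, ⟨0, hn⟩) v, p.length = kd v := by
  intro N
  induction N with
  | zero =>
    rintro ⟨a, b⟩ hm
    have : a = ⟨0, hn⟩ ∧ b = ⟨0, hn⟩ := by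
      unfold kd at hm; simp at hm
      exact ⟨Fin.ext hm.1, Fin.ext hm.2⟩
    obtain ⟨rfl, rfl⟩ := this
    exact ⟨SimpleGraph.Walk.nil, by rw [hm]; rfl⟩
  | succ m ih =>
    rintro ⟨a, b⟩ hm
    set w : Fin n × Fin n := (⟨min a.val m, lt_of_le_of_lt (min_le_left _ _) a.isLt⟩,
      ⟨min b.val m, lt_of_le_of_lt (min_le_left _ _) b.isLt⟩) with hw
    have hkw : kd w = m := by
      unfold kd at hm ⊢; simp only [hw]; dsimp only at hm ⊢; omega
    have hadj : (kingGraph n).Adj w (a, b) := by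
      refine ⟨?_, ?_, ?_⟩
      · intro hcon
        have : kd w = kd (a, b) := by rw [hcon]
        omega
      · simp only [hw]; unfold kd at hm; dsimp only at hm ⊢; omega
      · simp only [hw]; unfold kd at hm; dsimp only at hm ⊢; omega
    obtain ⟨p, hp⟩ := ih w hkw
    exact ⟨p.concat hadj, by simp [hp, hm, hkw]⟩

lemma exists_walk (hn : 0 < n) (v : Fin n × Fin n) :
    ∃ p : (kingGraph n).Walk (⟨0, hn⟩, ⟨0, hn⟩) v, p.length = kd v :=
  exists_walk_aux hn (kd v) v rfl

lemma dist_eq_kd (hn : 0 < n) (v : Fin n × Fin n) :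
    (kingGraph n).dist (⟨0, hn⟩, ⟨0, hn⟩) v = kd v := by
  obtain ⟨p, hp⟩ := exists_walk hn v
  refine le_antisymm (hp ▸ SimpleGraph.dist_le p) ?_
  obtain ⟨q, hq⟩ := (p.reachable).exists_walk_length_eq_dist
  have := kd_le_walk q
  have h0 : kd ((⟨0, hn⟩, ⟨0, hn⟩) : Fin n × Fin n) = 0 := by unfold kd; simp
  omega

end aux

open scoped Classical in
/-- For a spanning tree of the `n × n` eight-neighbor grid rooted at the corner
outlet `(0,0)` (given by a parent map whose edges are grid edges and which
reaches the root from every vertex), the total subtree area of the stripe `C_k`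
of vertices at king-move distance `k - 1` from the outlet is at least
`(2k - 1) + (n² - k²)`, for `2 ≤ k ≤ n`. -/
theorem stmt_13 (n : ℕ) (hn : 0 < n)
    (parent : Fin n × Fin n → Fin n × Fin n)
    (root : Fin n × Fin n) (hrootdef : root = (⟨0, hn⟩, ⟨0, hn⟩))
    (hroot : parent root = root)
    (hadj : ∀ v : Fin n × Fin n, v ≠ root → (kingGraph n).Adj (parent v) v)
    (hreach : ∀ v : Fin n × Fin n, ∃ m : ℕ, parent^[m] v = root)
    (A : Fin n × Fin n → ℕ)
    (hA : ∀ x : Fin n × Fin n,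
      A x = (Finset.univ.filter fun y : Fin n × Fin n => ∃ m : ℕ, parent^[m] y = x).card)
    (k : ℕ) (hk2 : 2 ≤ k) (hkn : k ≤ n) :
    ∑ x ∈ Finset.univ.filter
        (fun v : Fin n × Fin n => (kingGraph n).dist root v = k - 1), A x
      ≥ (2 * k - 1) + (n ^ 2 - k ^ 2) := by
  subst hrootdef
  set root : Fin n × Fin n := (⟨0, hn⟩, ⟨0, hn⟩) with hr
  have hkd0 : kd root = 0 := by unfold kd; simp [hr]
  -- each parent step decreases kd by at most 1
  have hstep : ∀ v : Fin n × Fin n, kd v ≤ kd (parent v) + 1 := by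
    intro v
    by_cases hv : v = root
    · subst hv; rw [hroot]; omega
    · exact kd_adj ((kingGraph n).adj_symm (hadj v hv))
  -- intermediate value: for v with kd v ≥ k-1, some iterate has kd = k-1
  have hiv : ∀ v : Fin n × Fin n, k - 1 ≤ kd v → ∃ m, kd (parent^[m] v) = k - 1 := by
    intro v hv
    obtain ⟨M, hM⟩ := hreach v
    have hex : ∃ m, kd (parent^[m] v) ≤ k - 1 := ⟨M, by rw [hM, hkd0]; omega⟩
    classical
    set m := Nat.find hex with hmdef
    have hle : kd (parent^[m] v) ≤ k - 1 := Nat.find_spec hex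
    refine ⟨m, ?_⟩
    rcases Nat.eq_zero_or_pos m with h0 | hpos
    · rw [h0] at hle ⊢; simp only [Function.iterate_zero, id_eq] at hle ⊢; omega
    · have hprev : ¬ kd (parent^[m-1] v) ≤ k - 1 := Nat.find_min hex (by omega)
      have heq : parent^[m] v = parent (parent^[m-1] v) := by
        conv_lhs => rw [show m = (m-1) + 1 by omega]
        rw [Function.iterate_succ_apply']
      have h2 := hstep (parent^[m-1] v)
      rw [heq] at hle ⊢
      omega
  -- the stripe
  set S := Finset.univ.filter
      (fun v : Fin n × Fin n => (kingGraph n).dist root v = k - 1) with hS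
  have hSd : S = Finset.univ.filter (fun v : Fin n × Fin n => kd v = k - 1) := by
    apply Finset.filter_congr
    intro v _
    rw [dist_eq_kd hn v]
  -- set of far vertices
  set B := Finset.univ.filter (fun v : Fin n × Fin n => k - 1 ≤ kd v) with hB
  have hsub : B ⊆ S.biUnion
      (fun x => Finset.univ.filter fun y : Fin n × Fin n => ∃ m : ℕ, parent^[m] y = x) := by
    intro y hy
    rw [hB, Finset.mem_filter] at hy
    obtain ⟨m, hm⟩ := hiv y hy.2
    rw [Finset.mem_biUnion]
    refine ⟨parent^[m] y, ?_, ?_⟩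
    · rw [hSd, Finset.mem_filter]; exact ⟨Finset.mem_univ _, hm⟩
    · rw [Finset.mem_filter]; exact ⟨Finset.mem_univ _, m, rfl⟩
  have hcard1 : B.card ≤ ∑ x ∈ S, A x := by
    calc B.card ≤ _ := Finset.card_le_card hsub
    _ ≤ ∑ x ∈ S, (Finset.univ.filter fun y : Fin n × Fin n => ∃ m : ℕ, parent^[m] y = x).card :=
        Finset.card_biUnion_le
    _ = ∑ x ∈ S, A x := by simp_rw [hA]
  -- count B
  have hBcard : B.card = n ^ 2 - (k - 1) ^ 2 := by
    have hcompl : (Finset.univ.filter (fun v : Fin n × Fin n => ¬ (k - 1 ≤ kd v))).card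
        = (k - 1) ^ 2 := by
      have : (Finset.univ.filter (fun v : Fin n × Fin n => ¬ (k - 1 ≤ kd v)))
          = (Finset.univ.filter (fun a : Fin n => a.val < k - 1)) ×ˢ
            (Finset.univ.filter (fun a : Fin n => a.val < k - 1)) := by
        ext ⟨a, b⟩
        simp only [Finset.mem_filter, Finset.mem_product, Finset.mem_univ, true_and]
        unfold kd
        dsimp only
        omega
      rw [this, Finset.card_product]
      have hc : (Finset.univ.filter (fun a : Fin n => a.val < k - 1)).card = k - 1 := by
        have heq : Finset.univ.filter (fun a : Fin n => a.val < k - 1)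
            = Finset.Iio (⟨k - 1, by omega⟩ : Fin n) := by
          ext a
          simp [Fin.lt_def]
        rw [heq, Fin.card_Iio]
      rw [hc]; ring
    have := Finset.card_filter_add_card_filter_not
      (s := (Finset.univ : Finset (Fin n × Fin n)))
      (p := fun v => k - 1 ≤ kd v)
    rw [hB]
    have hu : (Finset.univ : Finset (Fin n × Fin n)).card = n ^ 2 := by
      simp [sq]
    omega
  rw [← hS] at *
  have hk2n : k ^ 2 ≤ n ^ 2 := Nat.pow_le_pow_left hkn 2
  obtain ⟨j, rfl⟩ : ∃ j, k = j + 1 := ⟨k - 1, by omega⟩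
  have hsq : (j + 1) ^ 2 = j ^ 2 + 2 * j + 1 := by ring
  have : (j + 1) - 1 = j := by omega
  rw [this] at hBcard
  omega
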